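/- Let f : ℝ^{d×n} → ℝ^{d×m} satisfy f(QX) = Q f(X) for every orthogonal Q ∈ ℝ^{d×d}. Then every column of f(X) lies in the column span of X, i.e. there exists a matrix c(X) ∈ ℝ^{n×m} with f(X) = X · c(X). -/

import Mathlib

open Matrix
open scoped RealInnerProductSpace

/-- If `f : ℝ^{d×n} → ℝ^{d×m}` is orthogonal equivariant, then every column of
`f(X)` lies in the column span of `X`: there is `c(X) ∈ ℝ^{n×m}` with `f(X) = X c(X)`. -/
theorem orth_equivariant_factor (d n m : ℕ) (hd : 0 < d) (hn : 0 < n) (hm : 0 < m)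
    (f : Matrix (Fin d) (Fin n) ℝ → Matrix (Fin d) (Fin m) ℝ)
    (hf : ∀ (Q : Matrix (Fin d) (Fin d) ℝ) (X : Matrix (Fin d) (Fin n) ℝ),
      Qᵀ * Q = 1 → f (Q * X) = Q * f X) :
    ∀ X : Matrix (Fin d) (Fin n) ℝ, ∃ c : Matrix (Fin n) (Fin m) ℝ, f X = X * c := by
  intro X
  set W : Submodule ℝ (EuclideanSpace ℝ (Fin d)) :=
    LinearMap.range (Matrix.toEuclideanLin X) with hW
  set R : EuclideanSpace ℝ (Fin d) ≃ₗᵢ[ℝ] EuclideanSpace ℝ (Fin d) := Submodule.reflection W with hRdef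
  set Q : Matrix (Fin d) (Fin d) ℝ :=
    Matrix.toEuclideanLin.symm (R.toLinearEquiv : _ →ₗ[ℝ] _) with hQdef
  have hQlin : Matrix.toEuclideanLin Q = (R.toLinearEquiv : _ →ₗ[ℝ] _) := by
    simp [hQdef]
  have hQv : ∀ v : EuclideanSpace ℝ (Fin d), Matrix.toEuclideanLin Q v = R v := by
    intro v; rw [hQlin]; rfl
  have hRR : ∀ v : EuclideanSpace ℝ (Fin d), R (R v) = v := fun v =>
    Submodule.reflection_reflection W v
  -- R is symmetric
  have hsymm : (Matrix.toEuclideanLin Q).IsSymmetric := by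
    intro x y
    have h1 := R.inner_map_map x (R y)
    rw [hQv, hQv, ← h1, hRR]
  have hherm : Qᵀ = Q := by
    have := Matrix.isHermitian_iff_isSymmetric.mpr hsymm
    simpa [Matrix.IsHermitian] using this
  have hQQ : Q * Q = 1 := by
    apply Matrix.toEuclideanLin.injective
    apply LinearMap.ext
    intro v
    have : Matrix.toEuclideanLin (Q * Q) v
        = Matrix.toEuclideanLin Q (Matrix.toEuclideanLin Q v) := by
      simp [Matrix.toEuclideanLin_apply, Matrix.mulVec_mulVec]
    rw [this, hQv, hQv, hRR]
    simp [Matrix.toEuclideanLin_apply]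
  have hQorth : Qᵀ * Q = 1 := by rw [hherm, hQQ]
  -- Q fixes X
  have hQX : Q * X = X := by
    apply Matrix.toEuclideanLin.injective
    apply LinearMap.ext
    intro v
    have h2 : Matrix.toEuclideanLin (Q * X) v
        = Matrix.toEuclideanLin Q (Matrix.toEuclideanLin X v) := by
      simp [Matrix.toEuclideanLin_apply, Matrix.mulVec_mulVec]
    rw [h2, hQv]
    exact Submodule.reflection_mem_subspace_eq_self (LinearMap.mem_range_self _ v)
  have hfix : f X = Q * f X := by
    conv_lhs => rw [← hQX]
    exact hf Q X hQorth
  -- each column of f X is in W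
  have hcol : ∀ j : Fin m, ∃ v : EuclideanSpace ℝ (Fin n),
      Matrix.toEuclideanLin X v = (WithLp.equiv 2 (Fin d → ℝ)).symm (fun i => f X i j) := by
    intro j
    have hmem : (WithLp.equiv 2 (Fin d → ℝ)).symm (fun i => f X i j) ∈ W := by
      rw [← Submodule.reflection_eq_self_iff (K := W), ← hRdef, ← hQv]
      have hmv : Q *ᵥ (fun i => f X i j) = fun i => f X i j := by
        funext i
        have h3 := congrFun (congrFun hfix.symm i) j
        simpa [Matrix.mul_apply, Matrix.mulVec, dotProduct] using h3
      rw [WithLp.equiv_symm_apply, Matrix.toEuclideanLin_apply_piLp_toLp, hmv]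
    exact hmem
  choose cs hcs using hcol
  refine ⟨Matrix.of fun i j => WithLp.equiv 2 (Fin n → ℝ) (cs j) i, ?_⟩
  ext i j
  have := congrArg (fun w => WithLp.equiv 2 (Fin d → ℝ) w i) (hcs j)
  simp [Matrix.toEuclideanLin_apply, Matrix.mulVec, Matrix.mul_apply, dotProduct] at this ⊢
  rw [← this]
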